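/- A simple digraph D satisfies F(D) = 0 if and only if D is a directed cycle. -/

import Mathlib

/-- The set of out-neighbors of `v` in the digraph with arc relation `A`. -/
def Nout {V : Type} (A : V → V → Prop) (v : V) : Set V := {w | A v w}

/-- The set of in-neighbors of `v`. -/
def Nin {V : Type} (A : V → V → Prop) (v : V) : Set V := {w | A w v}

/-- One application of the color change rule to the set `S` of filled vertices. -/
def Bstep {V : Type} (A : V → V → Prop) (S : Set V) : Set V :=
  S ∪ {w | ∃ v ∈ S, Nout A v \ S = {w}}

/-- `S` is a zero forcing set: iterating the color change rule fills all vertices. -/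
def IsZFS {V : Type} (A : V → V → Prop) (S : Set V) : Prop :=
  ∃ t, (Bstep A)^[t] S = Set.univ

/-- The failed zero forcing number: the maximum cardinality of a failed zero forcing set. -/
noncomputable def Fnum {V : Type} (A : V → V → Prop) : ℕ :=
  sSup {k | ∃ S : Set V, ¬ IsZFS A S ∧ S.ncard = k}

/-- The zero forcing number: the minimum cardinality of a zero forcing set. -/
noncomputable def Znum {V : Type} (A : V → V → Prop) : ℕ :=
  sInf {k | ∃ S : Set V, IsZFS A S ∧ S.ncard = k}

/-- `W` is a critical set: `W` is nonempty and no vertex outside `W` has exactly one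
out-neighbor in `W`. -/
def IsCritical {V : Type} (A : V → V → Prop) (W : Set V) : Prop :=
  W.Nonempty ∧ ∀ v ∈ Wᶜ, (Nout A v ∩ W).ncard ≠ 1

/-- `D` is a directed cycle: either a single vertex with no arcs, or the vertices can be
cyclically labeled so that the arcs are exactly the consecutive ones. -/
def IsDirectedCycle {V : Type} [Fintype V] (A : V → V → Prop) : Prop :=
  (Fintype.card V = 1 ∧ ∀ u v : V, ¬ A u v) ∨
  (2 ≤ Fintype.card V ∧ ∃ e : ZMod (Fintype.card V) ≃ V,
      ∀ i j : ZMod (Fintype.card V), A (e i) (e j) ↔ j = i + 1)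

section Aux

variable {V : Type}

lemma bstep_subset (A : V → V → Prop) (S : Set V) : S ⊆ Bstep A S :=
  Set.subset_union_left

lemma bstep_empty (A : V → V → Prop) : Bstep A (∅ : Set V) = ∅ := by
  simp [Bstep]

lemma bstep_iter_empty (A : V → V → Prop) : ∀ t, (Bstep A)^[t] (∅ : Set V) = ∅
  | 0 => rfl
  | t + 1 => by rw [Function.iterate_succ_apply', bstep_iter_empty A t, bstep_empty]

lemma not_zfs_empty [Nonempty V] (A : V → V → Prop) : ¬ IsZFS A (∅ : Set V) := by
  rintro ⟨t, ht⟩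
  rw [bstep_iter_empty] at ht
  exact Set.empty_ne_univ ht

lemma fnum_eq_zero_iff [Fintype V] [Nonempty V] (A : V → V → Prop) :
    Fnum A = 0 ↔ ∀ S : Set V, S.Nonempty → IsZFS A S := by
  constructor
  · intro h S hS
    by_contra hnz
    have hmem : S.ncard ∈ {k | ∃ S : Set V, ¬ IsZFS A S ∧ S.ncard = k} := ⟨S, hnz, rfl⟩
    have hbdd : BddAbove {k | ∃ S : Set V, ¬ IsZFS A S ∧ S.ncard = k} := by
      refine ⟨Fintype.card V, ?_⟩
      rintro k ⟨T, _, rfl⟩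
      simpa [Set.ncard_univ, Nat.card_eq_fintype_card] using
        Set.ncard_le_ncard (Set.subset_univ T) Set.finite_univ
    have hle : S.ncard ≤ Fnum A := le_csSup hbdd hmem
    rw [h, Nat.le_zero] at hle
    rw [Set.ncard_eq_zero (Set.toFinite S)] at hle
    exact hS.ne_empty hle
  · intro h
    have hK : {k | ∃ S : Set V, ¬ IsZFS A S ∧ S.ncard = k} = {0} := by
      ext k
      simp only [Set.mem_setOf_eq, Set.mem_singleton_iff]
      constructor
      · rintro ⟨S, hS, rfl⟩
        rcases S.eq_empty_or_nonempty with rfl | hne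
        · simp
        · exact absurd (h S hne) hS
      · rintro rfl
        exact ⟨∅, not_zfs_empty A, by simp⟩
    rw [Fnum, hK, csSup_singleton]

/-- Strong-induction engine: strict growth of `Bstep` on proper nonempty sets implies
every nonempty set is a ZFS. -/
lemma zfs_of_growth [Fintype V] (A : V → V → Prop)
    (h : ∀ S : Set V, S.Nonempty → S ≠ Set.univ → ∃ w ∉ S, w ∈ Bstep A S) :
    ∀ S : Set V, S.Nonempty → IsZFS A S := by
  have key : ∀ m : ℕ, ∀ S : Set V, Sᶜ.ncard ≤ m → S.Nonempty → IsZFS A S := by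
    intro m
    induction m with
    | zero =>
      intro S hc _
      refine ⟨0, ?_⟩
      have : Sᶜ = ∅ := by
        rw [← Set.ncard_eq_zero (Set.toFinite _)]; omega
      simpa [Set.compl_empty_iff] using this
    | succ m ih =>
      intro S hc hne
      by_cases hu : S = Set.univ
      · exact ⟨0, hu⟩
      · obtain ⟨w, hw, hwB⟩ := h S hne hu
        have hsub : (Bstep A S)ᶜ ⊆ Sᶜ \ {w} := by
          intro x hx
          refine ⟨fun hxS => hx (bstep_subset A S hxS), fun hxw => ?_⟩
          exact hx (by rwa [Set.mem_singleton_iff.mp hxw])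
        have hlt : (Bstep A S)ᶜ.ncard ≤ m := by
          have h1 : (Bstep A S)ᶜ.ncard ≤ (Sᶜ \ {w}).ncard :=
            Set.ncard_le_ncard hsub (Set.toFinite _)
          have h2 : (Sᶜ \ {w}).ncard = Sᶜ.ncard - 1 :=
            Set.ncard_diff_singleton_of_mem hw
          have h3 : 1 ≤ Sᶜ.ncard := by
            rw [Nat.one_le_iff_ne_zero]
            intro h0
            rw [Set.ncard_eq_zero (Set.toFinite _)] at h0
            have hw2 : w ∈ Sᶜ := hw
            rw [h0] at hw2
            exact hw2
          omega
        obtain ⟨t, ht⟩ := ih (Bstep A S) hlt (hne.mono (bstep_subset A S))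
        exact ⟨t + 1, by rw [Function.iterate_succ_apply]; exact ht⟩
  intro S hne
  exact key (Sᶜ.ncard) S le_rfl hne

/-- In `ZMod n`, a nonempty set closed under adding 1 is everything. -/
lemma zmod_closed_univ {n : ℕ} [NeZero n] (T : Set (ZMod n)) (i₀ : ZMod n)
    (h0 : i₀ ∈ T) (hcl : ∀ i ∈ T, i + 1 ∈ T) : T = Set.univ := by
  have hk : ∀ k : ℕ, i₀ + (k : ZMod n) ∈ T := by
    intro k
    induction k with
    | zero => simpa using h0
    | succ k ih =>
      have : i₀ + ((k : ZMod n) + 1) = (i₀ + k) + 1 := by ring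
      rw [Nat.cast_succ, this]
      exact hcl _ ih
  ext j
  simp only [Set.mem_univ, iff_true]
  have := hk ((j - i₀).val)
  rwa [ZMod.natCast_rightInverse (j - i₀), add_sub_cancel] at this

end Aux

theorem stmt_6 {V : Type} [Fintype V] [Nonempty V] (A : V → V → Prop)
    (hA : Irreflexive A) :
    Fnum A = 0 ↔ IsDirectedCycle A := by
  classical
  rw [fnum_eq_zero_iff]
  rcases eq_or_lt_of_le (show 1 ≤ Fintype.card V from Fintype.card_pos) with hcard1 | hcard2
  · -- card V = 1
    have hsub : Subsingleton V := Fintype.card_le_one_iff_subsingleton.mp (by omega)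
    constructor
    · intro _
      left
      refine ⟨hcard1.symm, fun u v huv => ?_⟩
      have : u = v := Subsingleton.elim u v
      exact hA u (this ▸ huv)
    · intro _ S hS
      refine ⟨0, ?_⟩
      obtain ⟨v, hv⟩ := hS
      ext x
      simp only [Set.mem_univ, iff_true]
      rwa [Subsingleton.elim x v]
  · -- 2 ≤ card V
    have hn2 : 2 ≤ Fintype.card V := hcard2
    constructor
    · -- every nonempty set is a ZFS → directed cycle
      intro h
      right
      refine ⟨hn2, ?_⟩
      -- Step 1: every vertex has a unique out-neighbor
      have hout : ∀ v : V, ∃ w, Nout A v = {w} := by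
        intro v
        by_contra hno
        push_neg at hno
        have hfix : Bstep A {v} = {v} := by
          apply Set.Subset.antisymm _ (bstep_subset A {v})
          rintro w (hw | hw)
          · exact hw
          · obtain ⟨u, hu, huw⟩ := hw
            rw [Set.mem_singleton_iff] at hu
            subst hu
            rw [Set.diff_singleton_eq_self (show u ∉ Nout A u from hA u)] at huw
            exact absurd huw (hno w)
        obtain ⟨t, ht⟩ := h {v} ⟨v, rfl⟩
        have hit : ∀ s : ℕ, (Bstep A)^[s] {v} = {v} := by
          intro s
          induction s with
          | zero => rfl
          | succ s ih => rw [Function.iterate_succ_apply', ih, hfix]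
        rw [hit t] at ht
        obtain ⟨u, hu⟩ := Fintype.exists_ne_of_one_lt_card (by omega) v
        exact hu (by simpa using (ht ▸ Set.mem_univ u : u ∈ ({v} : Set V)))
      choose f hf using hout
      have hAf : ∀ v w : V, A v w ↔ w = f v := by
        intro v w
        constructor
        · intro hvw
          have : w ∈ Nout A v := hvw
          rw [hf v] at this; exact this
        · rintro rfl
          have : f v ∈ Nout A v := by rw [hf v]; rfl
          exact this
      have hB : ∀ S : Set V, Bstep A S = S ∪ f '' S := by
        intro S
        ext w
        simp only [Bstep, Set.mem_union, Set.mem_setOf_eq, Set.mem_image]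
        constructor
        · rintro (hw | ⟨v, hv, hvw⟩)
          · exact Or.inl hw
          · right
            refine ⟨v, hv, ?_⟩
            rw [hf v] at hvw
            have hm : w ∈ ({f v} : Set V) \ S := by rw [hvw]; rfl
            exact (Set.mem_singleton_iff.mp hm.1).symm
        · rintro (hw | ⟨v, hv, rfl⟩)
          · exact Or.inl hw
          · by_cases hfvS : f v ∈ S
            · exact Or.inl hfvS
            · right
              refine ⟨v, hv, ?_⟩
              rw [hf v]
              ext x
              simp only [Set.mem_diff, Set.mem_singleton_iff]
              constructor
              · exact fun hx => hx.1
              · rintro rfl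
                exact ⟨rfl, hfvS⟩
      -- Step 2: orbits of f cover everything
      have horb : ∀ v u : V, ∃ k, f^[k] v = u := by
        intro v u
        obtain ⟨t, ht⟩ := h {v} ⟨v, rfl⟩
        have hclosed : ∀ t : ℕ, (Bstep A)^[t] {v} ⊆ {u | ∃ k, f^[k] v = u} := by
          intro t
          induction t with
          | zero =>
            rintro x hx
            simp only [Function.iterate_zero, id_eq, Set.mem_singleton_iff] at hx
            exact ⟨0, hx.symm⟩
          | succ t ih =>
            rw [Function.iterate_succ_apply', hB]
            rintro x (hx | ⟨y, hy, rfl⟩)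
            · exact ih hx
            · obtain ⟨k, rfl⟩ := ih hy
              exact ⟨k + 1, Function.iterate_succ_apply' f k v⟩
        exact hclosed t (ht ▸ Set.mem_univ u)
      -- Step 3: f is bijective
      have hsurj : Function.Surjective f := by
        intro u
        obtain ⟨k, hk⟩ := horb (f u) u
        refine ⟨f^[k] u, ?_⟩
        rw [← Function.iterate_succ_apply' f k u, Function.iterate_succ_apply]
        exact hk
      have hinj : Function.Injective f := Finite.injective_iff_surjective.mpr hsurj
      -- Step 4: minimal period of a base point
      set v₀ : V := Classical.arbitrary V with hv₀
      have hper : ∃ m, 0 < m ∧ f^[m] v₀ = v₀ := by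
        obtain ⟨k, hk⟩ := horb (f v₀) v₀
        exact ⟨k + 1, Nat.succ_pos k, by rw [Function.iterate_succ_apply]; exact hk⟩
      set m := Nat.find hper with hm_def
      obtain ⟨hm_pos, hm_eq⟩ : 0 < m ∧ f^[m] v₀ = v₀ := Nat.find_spec hper
      have hm_min : ∀ j, j < m → ¬(0 < j ∧ f^[j] v₀ = v₀) := fun j hj => Nat.find_min hper hj
      have hmul : ∀ j : ℕ, f^[m * j] v₀ = v₀ := by
        intro j
        induction j with
        | zero => simp
        | succ j ih =>
          rw [Nat.mul_succ, Function.iterate_add_apply, hm_eq, ih]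
      have hmod : ∀ a : ℕ, f^[a] v₀ = f^[a % m] v₀ := by
        intro a
        conv_lhs => rw [← Nat.mod_add_div a m, Function.iterate_add_apply, hmul]
      have hginj : ∀ a b : ℕ, a < m → b < m → f^[a] v₀ = f^[b] v₀ → a = b := by
        have cancel : ∀ a b : ℕ, a ≤ b → b < m → f^[a] v₀ = f^[b] v₀ → a = b := by
          intro a b hab hbm heq
          by_contra hne
          have hd : 0 < b - a := by omega
          have : f^[a] (f^[b - a] v₀) = f^[a] v₀ := by
            rw [← Function.iterate_add_apply]
            rw [show a + (b - a) = b by omega]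
            exact heq.symm
          have hfix : f^[b - a] v₀ = v₀ := Function.Injective.iterate hinj a this
          exact hm_min (b - a) (by omega) ⟨hd, hfix⟩
        intro a b ha hb heq
        rcases le_total a b with hab | hba
        · exact cancel a b hab hb heq
        · exact (cancel b a hba ha heq.symm).symm
      have hgsurj : ∀ u : V, ∃ k, k < m ∧ f^[k] v₀ = u := by
        intro u
        obtain ⟨k, hk⟩ := horb v₀ u
        exact ⟨k % m, Nat.mod_lt k hm_pos, by rw [← hmod]; exact hk⟩
      -- Step 5: m = card V
      have hgbij : Function.Bijective (fun k : Fin m => f^[(k : ℕ)] v₀) := by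
        constructor
        · intro a b hab
          exact Fin.ext (hginj a b a.isLt b.isLt hab)
        · intro u
          obtain ⟨k, hkm, hk⟩ := hgsurj u
          exact ⟨⟨k, hkm⟩, hk⟩
      have hmn : m = Fintype.card V := by
        have := Fintype.card_of_bijective hgbij
        simpa using this
      haveI : NeZero (Fintype.card V) := ⟨by omega⟩
      -- Step 6: build the equivalence
      set n := Fintype.card V with hn_def
      have hEbij : Function.Bijective (fun i : ZMod n => f^[(ZMod.val i)] v₀) := by
        constructor
        · intro a b hab
          apply ZMod.val_injective n
          exact hginj _ _ (by rw [hmn]; exact ZMod.val_lt a)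
            (by rw [hmn]; exact ZMod.val_lt b) hab
        · intro u
          obtain ⟨k, hkm, hk⟩ := hgsurj u
          refine ⟨(k : ZMod n), ?_⟩
          simp only [ZMod.val_natCast]
          rw [Nat.mod_eq_of_lt (by omega)]
          exact hk
      refine ⟨Equiv.ofBijective _ hEbij, ?_⟩
      have hstep : ∀ i : ZMod n, (Equiv.ofBijective _ hEbij) (i + 1) =
          f ((Equiv.ofBijective _ hEbij) i) := by
        intro i
        haveI : Fact (1 < n) := ⟨by omega⟩
        show f^[(ZMod.val (i + 1))] v₀ = f (f^[(ZMod.val i)] v₀)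
        rw [← Function.iterate_succ_apply' f, ZMod.val_add, ZMod.val_one]
        have hidx : (ZMod.val i + 1) % n = (ZMod.val i + 1) % m := by rw [hmn]
        rw [hidx]
        exact (hmod (ZMod.val i + 1)).symm
      intro i j
      rw [hAf]
      constructor
      · intro hj
        have : (Equiv.ofBijective _ hEbij) j = (Equiv.ofBijective _ hEbij) (i + 1) := by
          rw [hstep i]; exact hj
        exact (Equiv.ofBijective _ hEbij).injective this
      · rintro rfl
        exact hstep i
    · -- directed cycle → every nonempty set is a ZFS
      rintro (⟨hc1, _⟩ | ⟨_, e, he⟩)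
      · omega
      · haveI : NeZero (Fintype.card V) := ⟨by omega⟩
        apply zfs_of_growth
        intro S hS hSu
        have hNout : ∀ i, Nout A (e i) = {e (i + 1)} := by
          intro i
          ext w
          obtain ⟨j, rfl⟩ := e.surjective w
          simp only [Nout, Set.mem_setOf_eq, Set.mem_singleton_iff, he i j,
            EmbeddingLike.apply_eq_iff_eq]
        set T : Set (ZMod (Fintype.card V)) := {i | e i ∈ S} with hT
        obtain ⟨v, hv⟩ := hS
        have hiT : e.symm v ∈ T := by simp [hT, hv]
        have hex : ∃ i ∈ T, i + 1 ∉ T := by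
          by_contra hno
          push_neg at hno
          have : T = Set.univ := zmod_closed_univ T (e.symm v) hiT hno
          apply hSu
          ext w
          simp only [Set.mem_univ, iff_true]
          have : e.symm w ∈ T := this ▸ Set.mem_univ _
          simpa [hT] using this
        obtain ⟨i, hiS, hi1⟩ := hex
        refine ⟨e (i + 1), hi1, ?_⟩
        right
        refine ⟨e i, hiS, ?_⟩
        rw [hNout i]
        ext x
        simp only [Set.mem_diff, Set.mem_singleton_iff]
        constructor
        · exact fun hx => hx.1
        · rintro rfl
          exact ⟨rfl, hi1⟩
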